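/- (Proposition 3 of the paper.) Let H_a and H_b be symmetric positive-semidefinite real d×d matrices with maximum eigenvalues λ_a, λ_b > 0, let g_{D_a}, g_{D_b} be nonzero vectors, and assume η_t ≤ 1/max(λ_a, λ_b). If E[‖ḡ_B‖ (cos θ_B^a − cos θ̄_B^a)] > (‖g_{D_b}‖/‖g_{D_a}‖)·E[‖ḡ_B‖ (cos θ_B^b − cos θ̄_B^b)] + E[‖ḡ_B‖²]/‖g_{D_a}‖, then the direction-error excessive risks satisfy R^dir_a > R^dir_b. -/

import Mathlib

set_option maxHeartbeats 1000000


open MeasureTheory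

/-- **Proposition 3 of the paper.** If
`E[‖ḡ_B‖(cos θ^a − cos θ̄^a)] > (‖g_{D_b}‖/‖g_{D_a}‖) E[‖ḡ_B‖(cos θ^b − cos θ̄^b)]
  + E[‖ḡ_B‖²]/‖g_{D_a}‖`, then `R^dir_a > R^dir_b`. -/
theorem dir_risk_comparison
    {d : ℕ} {Ω : Type*} [MeasurableSpace Ω] (P : Measure Ω) [IsProbabilityMeasure P]
    (g : Ω → EuclideanSpace ℝ (Fin d))
    (M : Ω → (EuclideanSpace ℝ (Fin d) →ₗ[ℝ] EuclideanSpace ℝ (Fin d)))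
    (c : Ω → ℝ)
    (Ha Hb : EuclideanSpace ℝ (Fin d) →ₗ[ℝ] EuclideanSpace ℝ (Fin d))
    (lama lamb : ℝ) (hlama0 : 0 < lama) (hlamb0 : 0 < lamb)
    (ga gb : EuclideanSpace ℝ (Fin d)) (hga : ga ≠ 0) (hgb : gb ≠ 0)
    (η : ℝ) (hη : 0 < η) (hηle : η ≤ 1 / max lama lamb)
    (hg0 : ∀ᵐ ω ∂P, g ω ≠ 0)
    (hc : ∀ ω, 0 ≤ c ω)
    (horth : ∀ ω x y, (inner ℝ (M ω x) (M ω y) : ℝ) = inner ℝ x y)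
    (hsyma : ∀ x y, (inner ℝ (Ha x) y : ℝ) = (inner ℝ x (Ha y) : ℝ))
    (hsymb : ∀ x y, (inner ℝ (Hb x) y : ℝ) = (inner ℝ x (Hb y) : ℝ))
    (hpsda : ∀ x, 0 ≤ (inner ℝ x (Ha x) : ℝ))
    (hpsdb : ∀ x, 0 ≤ (inner ℝ x (Hb x) : ℝ))
    (hlama : ∀ x : EuclideanSpace ℝ (Fin d), (inner ℝ x (Ha x) : ℝ) ≤ lama * ‖x‖ ^ 2)
    (hlamb : ∀ x : EuclideanSpace ℝ (Fin d), (inner ℝ x (Hb x) : ℝ) ≤ lamb * ‖x‖ ^ 2)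
    (hint_v : Integrable (fun ω => c ω • (g ω - M ω (g ω))) P)
    (hint_qa : Integrable (fun ω => c ω ^ 2 *
        ((inner ℝ (M ω (g ω)) (Ha (M ω (g ω))) : ℝ) - (inner ℝ (g ω) (Ha (g ω)) : ℝ))) P)
    (hint_qb : Integrable (fun ω => c ω ^ 2 *
        ((inner ℝ (M ω (g ω)) (Hb (M ω (g ω))) : ℝ) - (inner ℝ (g ω) (Hb (g ω)) : ℝ))) P)
    (hint_norm : Integrable (fun ω => ‖c ω • M ω (g ω)‖ ^ 2) P)
    (hint_cosa : Integrable (fun ω => ‖c ω • M ω (g ω)‖ *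
        ((inner ℝ ga (g ω) : ℝ) / (‖ga‖ * ‖g ω‖)
          - (inner ℝ ga (M ω (g ω)) : ℝ) / (‖ga‖ * ‖M ω (g ω)‖))) P)
    (hint_cosb : Integrable (fun ω => ‖c ω • M ω (g ω)‖ *
        ((inner ℝ gb (g ω) : ℝ) / (‖gb‖ * ‖g ω‖)
          - (inner ℝ gb (M ω (g ω)) : ℝ) / (‖gb‖ * ‖M ω (g ω)‖))) P)
    (hcond :
      (∫ ω, ‖c ω • M ω (g ω)‖ *
          ((inner ℝ ga (g ω) : ℝ) / (‖ga‖ * ‖g ω‖)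
            - (inner ℝ ga (M ω (g ω)) : ℝ) / (‖ga‖ * ‖M ω (g ω)‖)) ∂P)
        > (‖gb‖ / ‖ga‖) * (∫ ω, ‖c ω • M ω (g ω)‖ *
            ((inner ℝ gb (g ω) : ℝ) / (‖gb‖ * ‖g ω‖)
              - (inner ℝ gb (M ω (g ω)) : ℝ) / (‖gb‖ * ‖M ω (g ω)‖)) ∂P)
          + (∫ ω, ‖c ω • M ω (g ω)‖ ^ 2 ∂P) / ‖ga‖) :
    (η * (inner ℝ ga (∫ ω, c ω • (g ω - M ω (g ω)) ∂P) : ℝ)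
        + η ^ 2 / 2 * ∫ ω, c ω ^ 2 *
            ((inner ℝ (M ω (g ω)) (Ha (M ω (g ω))) : ℝ) - (inner ℝ (g ω) (Ha (g ω)) : ℝ)) ∂P)
      > (η * (inner ℝ gb (∫ ω, c ω • (g ω - M ω (g ω)) ∂P) : ℝ)
        + η ^ 2 / 2 * ∫ ω, c ω ^ 2 *
            ((inner ℝ (M ω (g ω)) (Hb (M ω (g ω))) : ℝ) - (inner ℝ (g ω) (Hb (g ω)) : ℝ)) ∂P) := by

  -- Norm preservation under M
  have hMnorm : ∀ ω, ‖M ω (g ω)‖ = ‖g ω‖ := by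
    intro ω
    have h := horth ω (g ω) (g ω)
    rw [real_inner_self_eq_norm_sq, real_inner_self_eq_norm_sq] at h
    exact (sq_eq_sq₀ (norm_nonneg _) (norm_nonneg _)).mp (by simpa using h)
  have hclip : ∀ ω, ‖c ω • M ω (g ω)‖ = c ω * ‖g ω‖ := by
    intro ω
    rw [norm_smul, Real.norm_eq_abs, abs_of_nonneg (hc ω), hMnorm]
  have hga0 : (0:ℝ) < ‖ga‖ := norm_pos_iff.mpr hga
  have hgb0 : (0:ℝ) < ‖gb‖ := norm_pos_iff.mpr hgb
  -- pointwise identity for the first-order term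
  have hptwise : ∀ (u : EuclideanSpace ℝ (Fin d)) (_ : u ≠ 0), ∀ᵐ ω ∂P,
      (inner ℝ u (c ω • (g ω - M ω (g ω))) : ℝ) =
        ‖u‖ * (‖c ω • M ω (g ω)‖ *
          ((inner ℝ u (g ω) : ℝ) / (‖u‖ * ‖g ω‖)
            - (inner ℝ u (M ω (g ω)) : ℝ) / (‖u‖ * ‖M ω (g ω)‖))) := by
    intro u hu
    filter_upwards [hg0] with ω hω
    have hgn : (0:ℝ) < ‖g ω‖ := norm_pos_iff.mpr hω
    have hun : (0:ℝ) < ‖u‖ := norm_pos_iff.mpr hu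
    rw [real_inner_smul_right, inner_sub_right, hclip, hMnorm]
    field_simp
  -- rewrite inner products with the integral
  have hkey : ∀ (u : EuclideanSpace ℝ (Fin d)) (_ : u ≠ 0),
      (inner ℝ u (∫ ω, c ω • (g ω - M ω (g ω)) ∂P) : ℝ) =
        ‖u‖ * ∫ ω, ‖c ω • M ω (g ω)‖ *
          ((inner ℝ u (g ω) : ℝ) / (‖u‖ * ‖g ω‖)
            - (inner ℝ u (M ω (g ω)) : ℝ) / (‖u‖ * ‖M ω (g ω)‖)) ∂P := by
    intro u hu
    rw [← integral_inner hint_v, integral_congr_ae (hptwise u hu), integral_const_mul]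
  have hkeya := hkey ga hga
  have hkeyb := hkey gb hgb
  set Ia := ∫ ω, ‖c ω • M ω (g ω)‖ *
      ((inner ℝ ga (g ω) : ℝ) / (‖ga‖ * ‖g ω‖)
        - (inner ℝ ga (M ω (g ω)) : ℝ) / (‖ga‖ * ‖M ω (g ω)‖)) ∂P with hIa
  set Ib := ∫ ω, ‖c ω • M ω (g ω)‖ *
      ((inner ℝ gb (g ω) : ℝ) / (‖gb‖ * ‖g ω‖)
        - (inner ℝ gb (M ω (g ω)) : ℝ) / (‖gb‖ * ‖M ω (g ω)‖)) ∂P with hIb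
  set N := ∫ ω, ‖c ω • M ω (g ω)‖ ^ 2 ∂P with hN
  have hN0 : 0 ≤ N := integral_nonneg fun ω => by positivity
  -- bounds on the quadratic terms
  have hQa : -(lama * N) ≤ ∫ ω, c ω ^ 2 *
      ((inner ℝ (M ω (g ω)) (Ha (M ω (g ω))) : ℝ) - (inner ℝ (g ω) (Ha (g ω)) : ℝ)) ∂P := by
    have : ∫ ω, -(lama * ‖c ω • M ω (g ω)‖ ^ 2) ∂P ≤ _ :=
      integral_mono ((hint_norm.const_mul lama).neg) hint_qa (fun ω => by
        have h1 := hpsda (M ω (g ω))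
        have h2 := hlama (g ω)
        have h3 : ‖c ω • M ω (g ω)‖ ^ 2 = c ω ^ 2 * ‖g ω‖ ^ 2 := by
          rw [hclip]; ring
        have h4 : (0:ℝ) ≤ c ω ^ 2 := sq_nonneg _
        simp only [h3]
        nlinarith)
    simpa [integral_neg, integral_const_mul] using this
  have hQb : (∫ ω, c ω ^ 2 *
      ((inner ℝ (M ω (g ω)) (Hb (M ω (g ω))) : ℝ) - (inner ℝ (g ω) (Hb (g ω)) : ℝ)) ∂P)
        ≤ lamb * N := by
    have : _ ≤ ∫ ω, lamb * ‖c ω • M ω (g ω)‖ ^ 2 ∂P :=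
      integral_mono hint_qb (hint_norm.const_mul lamb) (fun ω => by
        have h1 := hpsdb (g ω)
        have h2 := hlamb (M ω (g ω))
        have h3 : ‖c ω • M ω (g ω)‖ ^ 2 = c ω ^ 2 * ‖g ω‖ ^ 2 := by
          rw [hclip]; ring
        have h5 : ‖M ω (g ω)‖ = ‖g ω‖ := hMnorm ω
        rw [h5] at h2
        have h4 : (0:ℝ) ≤ c ω ^ 2 := sq_nonneg _
        simp only [h3]
        nlinarith)
    simpa [integral_const_mul] using this
  rw [hkeya, hkeyb]
  -- from the hypothesis: ‖ga‖ * Ia > ‖gb‖ * Ib + N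
  have hmain : ‖ga‖ * Ia > ‖gb‖ * Ib + N := by
    have := mul_lt_mul_of_pos_left hcond hga0
    rw [mul_add, ← mul_assoc, mul_div_cancel₀ _ (ne_of_gt hga0),
      mul_div_cancel₀ _ (ne_of_gt hga0)] at this
    linarith
  -- step size condition
  have hmax : (0:ℝ) < max lama lamb := lt_max_of_lt_left hlama0
  have hηsum : η * (lama + lamb) ≤ 2 := by
    have h1 : η * max lama lamb ≤ 1 := by
      rw [one_div] at hηle
      calc η * max lama lamb ≤ (max lama lamb)⁻¹ * max lama lamb :=
            mul_le_mul_of_nonneg_right hηle (le_of_lt hmax)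
        _ = 1 := inv_mul_cancel₀ (ne_of_gt hmax)
    have h2 : lama ≤ max lama lamb := le_max_left _ _
    have h3 : lamb ≤ max lama lamb := le_max_right _ _
    nlinarith
  have h1 : η * (‖gb‖ * Ib + N) < η * (‖ga‖ * Ia) := mul_lt_mul_of_pos_left hmain hη
  have hsq : (0:ℝ) ≤ η ^ 2 / 2 := by positivity
  have h2 := mul_le_mul_of_nonneg_left hQa hsq
  have h3 := mul_le_mul_of_nonneg_left hQb hsq
  have h4 : 0 ≤ η * N * (2 - η * (lama + lamb)) :=
    mul_nonneg (mul_nonneg hη.le hN0) (by linarith)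
  nlinarith [h1, h2, h3, h4]
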